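/- The center of the SSR group G equals Z = {(s,0,0,0,1) : s ∈ R}. -/

import Mathlib

/-- The underlying set of the SSR group: (s,x,y,b,r) with r > 0. -/
def SSR : Type := ℝ × ℝ × ℝ × ℝ × {r : ℝ // 0 < r}

/-- The SSR group multiplication. -/
noncomputable def ssrMul (g g' : SSR) : SSR :=
  ⟨g.1 + g'.1 + g.2.1 * ((g.2.2.2.2 : ℝ)⁻¹ * g'.2.2.1)
      - g.2.2.2.1 * ((g.2.2.2.2 : ℝ)⁻¹ * g'.2.2.1) ^ 2 / 2,
   g.2.1 + (g.2.2.2.2 : ℝ) * g'.2.1 - g.2.2.2.1 * ((g.2.2.2.2 : ℝ)⁻¹ * g'.2.2.1),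
   g.2.2.1 + (g.2.2.2.2 : ℝ)⁻¹ * g'.2.2.1,
   g.2.2.2.1 + g'.2.2.2.1 * (g.2.2.2.2 : ℝ) ^ 2,
   ⟨(g.2.2.2.2 : ℝ) * (g'.2.2.2.2 : ℝ), mul_pos g.2.2.2.2.2 g'.2.2.2.2.2⟩⟩

/-- The identity element of the SSR group. -/
noncomputable def ssrOne : SSR := ⟨0, 0, 0, 0, ⟨1, one_pos⟩⟩

/-- The centre of the SSR group is Z = {(s,0,0,0,1) : s ∈ ℝ}. -/
theorem ssr_center :
    {g : SSR | ∀ h : SSR, ssrMul g h = ssrMul h g} =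
      {g : SSR | g.2.1 = 0 ∧ g.2.2.1 = 0 ∧ g.2.2.2.1 = 0 ∧ (g.2.2.2.2 : ℝ) = 1} := by
  ext ⟨s, x, y, b, r, hr⟩
  change (∀ h : SSR, ssrMul _ h = ssrMul h _) ↔ (_ ∧ _ ∧ _ ∧ _)
  constructor
  · intro H
    have h2 := H ⟨0, 0, 1, 0, ⟨1, one_pos⟩⟩
    have h3 := H ⟨0, 0, 0, 1, ⟨1, one_pos⟩⟩
    have e4 := congrArg (fun g : SSR => g.2.2.2.1) h3
    have e2 := congrArg (fun g : SSR => g.2.1) h3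
    have f2 := congrArg (fun g : SSR => g.2.1) h2
    have f1 := congrArg (fun g : SSR => g.1) h2
    simp only [ssrMul] at e4 e2 f2 f1
    have hr0 : r ≠ 0 := ne_of_gt hr
    have hr1 : r = 1 := by norm_num at e4; nlinarith
    subst hr1
    have hb : b = 0 := by field_simp at f2; linarith
    subst hb
    have hx : x = 0 := by field_simp at f1; linarith
    have hy : y = 0 := by norm_num at e2; linarith
    exact ⟨hx, hy, rfl, rfl⟩
  · rintro ⟨hx, hy, hb, hr1⟩
    have hr2 : r = 1 := hr1
    subst hx; subst hy; subst hb; subst hr2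
    intro ⟨s', x', y', b', r', hr'⟩
    simp only [ssrMul, Prod.mk.injEq, Subtype.mk.injEq, hr1]
    norm_num [add_comm]
    rfl
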